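/- For all real x with |x| < 1, Σ_{i=0}^∞ sin(2π(-1/2)^i x) = Σ_{k=0}^∞ (-1)^k (2πx)^{2k+1}/(2k+1)! · 2^{2k+1}/(2^{2k+1} + 1). -/

import Mathlib

theorem sin_series_rearrangement :
    ∀ x : ℝ, |x| < 1 →
      (∑' i : ℕ, Real.sin (2 * Real.pi * (-1/2 : ℝ)^i * x))
        = ∑' k : ℕ,
            (-1 : ℝ)^k * (2 * Real.pi * x)^(2*k+1) / (Nat.factorial (2*k+1))
              * (2^(2*k+1) / (2^(2*k+1) + 1)) := by
  intro x _
  set t : ℝ := 2 * Real.pi * x with ht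
  set f : ℕ → ℕ → ℝ := fun i k =>
    (-1 : ℝ)^k * (2 * Real.pi * (-1/2 : ℝ)^i * x)^(2*k+1) / (Nat.factorial (2*k+1)) with hf
  have hinj : Function.Injective (fun k : ℕ => 2*k+1) := by
    intro a b h
    simp only at h
    omega
  have hg : Summable (fun k : ℕ => |t|^(2*k+1) / (Nat.factorial (2*k+1) : ℝ)) :=
    (Real.summable_pow_div_factorial |t|).comp_injective hinj
  have hgnn : ∀ k : ℕ, 0 ≤ |t|^(2*k+1) / (Nat.factorial (2*k+1) : ℝ) := fun k =>
    div_nonneg (pow_nonneg (abs_nonneg _) _) (Nat.cast_nonneg _)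
  have habs : ∀ i k, |f i k| = (|t| * (1/2)^i)^(2*k+1) / (Nat.factorial (2*k+1) : ℝ) := by
    intro i k
    have h1 : |2 * Real.pi * (-1/2 : ℝ)^i * x| = |t| * (1/2 : ℝ)^i := by
      rw [abs_mul, abs_mul, abs_mul, abs_pow, ht, abs_mul, abs_mul]
      have : |(-1/2 : ℝ)| = 1/2 := by norm_num
      rw [this]
      ring
    rw [hf]
    rw [abs_div, abs_mul, abs_pow, abs_pow, abs_neg, abs_one, one_pow, one_mul, h1,
      Nat.abs_cast]
  have hbound : ∀ i k, |f i k| ≤ (1/2 : ℝ)^i * (|t|^(2*k+1) / (Nat.factorial (2*k+1) : ℝ)) := by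
    intro i k
    have h1 : ((1/2:ℝ)^i)^(2*k+1) ≤ (1/2:ℝ)^i := by
      rw [← pow_mul]
      apply pow_le_pow_of_le_one (by norm_num) (by norm_num)
      nlinarith [Nat.zero_le (i * k)]
    rw [habs i k, mul_pow, mul_comm (|t|^(2*k+1)), mul_div_assoc]
    gcongr
  have hgeo : Summable (fun i : ℕ => (1/2 : ℝ)^i) :=
    summable_geometric_of_lt_one (by norm_num) (by norm_num)
  have hprod : Summable (Function.uncurry fun i k => f i k) := by
    apply Summable.of_norm_bounded
      (hgeo.mul_of_nonneg hg (fun i => by positivity) hgnn)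
    intro p
    simpa [Real.norm_eq_abs, Function.uncurry] using hbound p.1 p.2
  have hsin : ∀ i : ℕ, HasSum (fun k => f i k) (Real.sin (2 * Real.pi * (-1/2 : ℝ)^i * x)) :=
    fun i => Real.hasSum_sin _
  have hrow : ∀ k : ℕ, Summable (fun i => f i k) := by
    intro k
    apply Summable.of_norm_bounded
      (hgeo.mul_right (|t|^(2*k+1) / (Nat.factorial (2*k+1) : ℝ)))
    intro i
    simpa [Real.norm_eq_abs] using hbound i k
  calc (∑' i : ℕ, Real.sin (2 * Real.pi * (-1/2 : ℝ)^i * x))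
      = ∑' i : ℕ, ∑' k : ℕ, f i k := tsum_congr fun i => (hsin i).tsum_eq.symm
    _ = ∑' k : ℕ, ∑' i : ℕ, f i k :=
        (Summable.tsum_comm' hprod (fun i => (hsin i).summable) hrow).symm
    _ = ∑' k : ℕ, (-1 : ℝ)^k * t^(2*k+1) / (Nat.factorial (2*k+1))
          * (2^(2*k+1) / (2^(2*k+1) + 1)) := by
        refine tsum_congr fun k => ?_
        have hfeq : ∀ i : ℕ, f i k =
            ((-1/2 : ℝ)^(2*k+1))^i * ((-1 : ℝ)^k * t^(2*k+1) / (Nat.factorial (2*k+1))) := by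
          intro i
          have h3 : (2 * Real.pi * (-1/2 : ℝ)^i * x)^(2*k+1)
              = ((-1/2 : ℝ)^(2*k+1))^i * (2 * Real.pi * x)^(2*k+1) := by
            rw [show (2 * Real.pi * (-1/2 : ℝ)^i * x)
                = ((-1/2 : ℝ)^i) * (2 * Real.pi * x) by ring,
              mul_pow, ← pow_mul, mul_comm i (2*k+1), pow_mul]
          show (-1:ℝ)^k * (2 * Real.pi * (-1/2 : ℝ)^i * x)^(2*k+1) / (Nat.factorial (2*k+1)) = _
          rw [h3, ht]
          ring
        rw [tsum_congr hfeq, tsum_mul_right]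
        have hlt : ‖(-1/2 : ℝ)^(2*k+1)‖ < 1 := by
          rw [norm_pow, Real.norm_eq_abs]
          have : |(-1/2 : ℝ)| = 1/2 := by norm_num
          rw [this]
          exact pow_lt_one₀ (by norm_num) (by norm_num) (by omega)
        rw [tsum_geometric_of_norm_lt_one hlt]
        have hodd : Odd (2*k+1) := ⟨k, by ring⟩
        have h2 : ((-1/2 : ℝ))^(2*k+1) = -((1/2 : ℝ))^(2*k+1) := by
          rw [show (-1/2 : ℝ) = -(1/2) by norm_num, hodd.neg_pow]
        rw [h2]
        have hpos : (0:ℝ) < 2^(2*k+1) := by positivity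
        rw [show (1/2 : ℝ) = (2:ℝ)⁻¹ by norm_num, inv_pow]
        have hne : (2:ℝ)^(2*k+1) + 1 ≠ 0 := by positivity
        field_simp
        ring_nf
        have hA : (1 + (2:ℝ)^(k*2)*2) ≠ 0 := by positivity
        have key : t * t ^ (k*2) * (1 + (2:ℝ)^(k*2)*2)⁻¹ * (1 + (2:ℝ)^(k*2)*2) = t * t^(k*2) :=
          inv_mul_cancel_right₀ hA _
        linear_combination key
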